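/- arXiv:2401.01714 — 4 statements merged into one kernel-verified Lean document; each statement's English description precedes it below -/
import Mathlib

section
/- If S₁ is an η₁-sparse family of dyadic cubes and S₂ is an η₂-sparse family of dyadic cubes (both contained in the dyadic descendants of a cube Q₀), then S₁ ∪ S₂ is an (η₁η₂/(η₁+η₂))-sparse family. -/
open MeasureTheory

/-- **Union of sparse families.** If `S₁` is `η₁`-sparse (equivalently `1/η₁`-Carleson) and
`S₂` is `η₂`-sparse, both consisting of dyadic descendants of a cube `Q₀` (the lattice `𝒟`),
then `S₁ ∪ S₂` is `η₁η₂/(η₁+η₂)`-sparse, i.e. `(η₁+η₂)/(η₁η₂)`-Carleson. -/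
theorem stmt_0 {α : Type*} [MeasurableSpace α] (μ : Measure α)
    (𝒟 S₁ S₂ : Set (Set α)) (η₁ η₂ : ℝ)
    (hη₁ : 0 < η₁) (hη₁' : η₁ < 1) (hη₂ : 0 < η₂) (hη₂' : η₂ < 1)
    (hS₁ : S₁ ⊆ 𝒟) (hS₂ : S₂ ⊆ 𝒟)
    (hC₁ : ∀ Q ∈ 𝒟, ∑' P : {P : Set α // P ∈ S₁ ∧ P ⊆ Q}, μ (P : Set α)
      ≤ ENNReal.ofReal (1 / η₁) * μ Q)
    (hC₂ : ∀ Q ∈ 𝒟, ∑' P : {P : Set α // P ∈ S₂ ∧ P ⊆ Q}, μ (P : Set α)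
      ≤ ENNReal.ofReal (1 / η₂) * μ Q) :
    ∀ Q ∈ 𝒟, ∑' P : {P : Set α // P ∈ S₁ ∪ S₂ ∧ P ⊆ Q}, μ (P : Set α)
      ≤ ENNReal.ofReal (1 / (η₁ * η₂ / (η₁ + η₂))) * μ Q := by
  intro Q hQ
  have hset : {P : Set α | P ∈ S₁ ∪ S₂ ∧ P ⊆ Q}
      = {P : Set α | P ∈ S₁ ∧ P ⊆ Q} ∪ {P : Set α | P ∈ S₂ ∧ P ⊆ Q} := by
    ext P; simp [Set.mem_union, or_and_right]
  have h1 : ∑' P : {P : Set α // P ∈ S₁ ∪ S₂ ∧ P ⊆ Q}, μ (P : Set α)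
      ≤ (∑' P : {P : Set α // P ∈ S₁ ∧ P ⊆ Q}, μ (P : Set α))
        + ∑' P : {P : Set α // P ∈ S₂ ∧ P ⊆ Q}, μ (P : Set α) := by
    have := ENNReal.tsum_union_le (fun P : Set α => μ P)
      {P : Set α | P ∈ S₁ ∧ P ⊆ Q} {P : Set α | P ∈ S₂ ∧ P ⊆ Q}
    calc ∑' P : {P : Set α // P ∈ S₁ ∪ S₂ ∧ P ⊆ Q}, μ (P : Set α)
        = ∑' P : ({P : Set α | P ∈ S₁ ∧ P ⊆ Q} ∪ {P : Set α | P ∈ S₂ ∧ P ⊆ Q} : Set (Set α)),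
            μ (P : Set α) := by rw [← hset]; rfl
      _ ≤ _ := this
  have heq : (1 : ℝ) / (η₁ * η₂ / (η₁ + η₂)) = 1 / η₁ + 1 / η₂ := by
    field_simp; ring
  calc ∑' P : {P : Set α // P ∈ S₁ ∪ S₂ ∧ P ⊆ Q}, μ (P : Set α)
      ≤ ENNReal.ofReal (1 / η₁) * μ Q + ENNReal.ofReal (1 / η₂) * μ Q :=
        h1.trans (add_le_add (hC₁ Q hQ) (hC₂ Q hQ))
    _ = ENNReal.ofReal (1 / (η₁ * η₂ / (η₁ + η₂))) * μ Q := by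
        rw [heq, ENNReal.ofReal_add (by positivity) (by positivity), add_mul]
end

section
/- Let Φ₀, Φ₁, ..., Φₘ be continuous, nonnegative, strictly increasing functions on [0,∞) with Φᵢ(0)=0 and lim_{t→∞} Φᵢ(t)=∞, satisfying Φ₁⁻¹(t)·Φ₂⁻¹(t)···Φₘ⁻¹(t) ≤ D·Φ₀⁻¹(t) for all t ≥ 0. Then for all nonnegative real numbers x₁, ..., xₘ, Φ₀(x₁x₂···xₘ/D) ≤ Φ₁(x₁) + Φ₂(x₂) + ··· + Φₘ(xₘ). -/
/-- Pointwise Young-type inequality: if `Φ₁⁻¹(t)⋯Φₘ⁻¹(t) ≤ D Φ₀⁻¹(t)` for `t ≥ 0`,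
where the `Φᵢ` are continuous, nonnegative, strictly increasing on `[0,∞)` with
`Φᵢ(0) = 0` and `Φᵢ(t) → ∞`, then `Φ₀(x₁⋯xₘ/D) ≤ Φ₁(x₁) + ⋯ + Φₘ(xₘ)` for
nonnegative `x₁, …, xₘ`.  The inverses are represented by functions `Ψᵢ`. -/
theorem stmt_1 (m : ℕ) (D : ℝ) (hD : 0 < D)
    (Φ₀ : ℝ → ℝ) (Φ : Fin m → ℝ → ℝ) (Ψ₀ : ℝ → ℝ) (Ψ : Fin m → ℝ → ℝ)
    (hΦ₀cont : ContinuousOn Φ₀ (Set.Ici 0))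
    (hΦ₀mono : StrictMonoOn Φ₀ (Set.Ici 0))
    (hΦ₀nonneg : ∀ t ≥ (0:ℝ), 0 ≤ Φ₀ t)
    (hΦ₀zero : Φ₀ 0 = 0)
    (hΦ₀top : Filter.Tendsto Φ₀ Filter.atTop Filter.atTop)
    (hΦcont : ∀ i, ContinuousOn (Φ i) (Set.Ici 0))
    (hΦmono : ∀ i, StrictMonoOn (Φ i) (Set.Ici 0))
    (hΦnonneg : ∀ i, ∀ t ≥ (0:ℝ), 0 ≤ Φ i t)
    (hΦzero : ∀ i, Φ i 0 = 0)
    (hΦtop : ∀ i, Filter.Tendsto (Φ i) Filter.atTop Filter.atTop)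
    (hΨ₀ : ∀ t ≥ (0:ℝ), 0 ≤ Ψ₀ t ∧ Φ₀ (Ψ₀ t) = t ∧ Ψ₀ (Φ₀ t) = t)
    (hΨ : ∀ i, ∀ t ≥ (0:ℝ), 0 ≤ Ψ i t ∧ Φ i (Ψ i t) = t ∧ Ψ i (Φ i t) = t)
    (hprod : ∀ t ≥ (0:ℝ), (∏ i, Ψ i t) ≤ D * Ψ₀ t) :
    ∀ x : Fin m → ℝ, (∀ i, 0 ≤ x i) →
      Φ₀ ((∏ i, x i) / D) ≤ ∑ i, Φ i (x i) := by
  intro x hx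
  set t : ℝ := ∑ i, Φ i (x i) with ht
  have ht0 : 0 ≤ t := Finset.sum_nonneg fun i _ => hΦnonneg i (x i) (hx i)
  have hxle : ∀ i, x i ≤ Ψ i t := by
    intro i
    have hle : Φ i (x i) ≤ t :=
      Finset.single_le_sum (f := fun j => Φ j (x j))
        (fun j _ => hΦnonneg j (x j) (hx j)) (Finset.mem_univ i)
    have hΨit := hΨ i t ht0
    by_contra hcon
    push_neg at hcon
    have := (hΦmono i) hΨit.1 (Set.mem_Ici.mpr (hx i)) hcon
    rw [hΨit.2.1] at this
    linarith
  have hprodle : (∏ i, x i) ≤ D * Ψ₀ t := by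
    refine le_trans ?_ (hprod t ht0)
    exact Finset.prod_le_prod (fun i _ => hx i) (fun i _ => hxle i)
  have hΨ₀t := hΨ₀ t ht0
  have h1 : (∏ i, x i) / D ≤ Ψ₀ t := by
    rw [div_le_iff₀ hD]; linarith [hprodle, mul_comm D (Ψ₀ t)]
  have hp0 : 0 ≤ (∏ i, x i) / D :=
    div_nonneg (Finset.prod_nonneg fun i _ => hx i) hD.le
  calc Φ₀ ((∏ i, x i) / D) ≤ Φ₀ (Ψ₀ t) :=
        (hΦ₀mono.monotoneOn) (Set.mem_Ici.mpr hp0) (Set.mem_Ici.mpr hΨ₀t.1) h1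
    _ = t := hΨ₀t.2.1
end

section
/- For x ≥ 0 and t > 0 let φ_t(x) = e^{x^t} - 1 and Φ_{1/s}(x) = x(log(e+x))^{1/s}, where 1/s = 1/s₁ + ··· + 1/sₘ with s₁, ..., sₘ ≥ 1. Then φ_{s₁}⁻¹(x)·φ_{s₂}⁻¹(x)···φ_{sₘ}⁻¹(x)·Φ_{1/s}⁻¹(x) ≤ 2^{1/s}(1+1/s)^{1/s} x for all x ≥ 0. -/
/-- With `φ_t⁻¹(x) = (log(x+1))^{1/t}` and `Φ_{1/s}⁻¹` the inverse of
`Φ_{1/s}(x) = x (log(e+x))^{1/s}`, where `1/s = 1/s₁ + ⋯ + 1/sₘ` with `sᵢ ≥ 1`, one has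
`φ_{s₁}⁻¹(x)⋯φ_{sₘ}⁻¹(x)·Φ_{1/s}⁻¹(x) ≤ 2^{1/s}(1+1/s)^{1/s} x` for all `x ≥ 0`.
Here `r` denotes `1/s`. -/
theorem stmt_4 (m : ℕ) (hm : 1 ≤ m) (s : Fin m → ℝ) (hs : ∀ i, 1 ≤ s i)
    (r : ℝ) (hr : r = ∑ i, 1 / s i) (Ψ : ℝ → ℝ)
    (hinv : ∀ x ≥ (0:ℝ), 0 ≤ Ψ x ∧ Ψ x * Real.log (Real.exp 1 + Ψ x) ^ r = x ∧
      Ψ (x * Real.log (Real.exp 1 + x) ^ r) = x) :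
    ∀ x ≥ (0:ℝ),
      (∏ i, Real.log (x + 1) ^ (1 / s i)) * Ψ x ≤ (2:ℝ) ^ r * (1 + r) ^ r * x := by
  have hspos : ∀ i, 0 < s i := fun i => lt_of_lt_of_le one_pos (hs i)
  have hr0 : 0 ≤ r := by
    rw [hr]
    exact Finset.sum_nonneg fun i _ => le_of_lt (one_div_pos.mpr (hspos i))
  intro x hx
  rcases eq_or_lt_of_le hx with h0 | hxpos
  · -- x = 0 case
    have i0 : Fin m := ⟨0, hm⟩
    have : (∏ i, Real.log (x + 1) ^ (1 / s i)) = 0 := by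
      apply Finset.prod_eq_zero (Finset.mem_univ i0)
      rw [← h0, zero_add, Real.log_one, Real.zero_rpow (one_div_ne_zero (ne_of_gt (hspos i0)))]
    rw [this, ← h0]
    simp
  · obtain ⟨hΨ0, hΨeq, -⟩ := hinv x hx
    set y := Ψ x with hy
    set L := Real.log (Real.exp 1 + y) with hLdef
    have hL1 : 1 ≤ L := by
      have h1 : Real.exp 1 ≤ Real.exp 1 + y := by linarith
      calc (1:ℝ) = Real.log (Real.exp 1) := (Real.log_exp 1).symm
        _ ≤ L := Real.log_le_log (Real.exp_pos 1) h1
    have hL0 : 0 ≤ L := le_trans zero_le_one hL1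
    have hLr1 : 1 ≤ L ^ r := Real.one_le_rpow hL1 hr0
    have hLr0 : 0 ≤ L ^ r := le_trans zero_le_one hLr1
    -- key inequality
    have hkey : Real.log (x + 1) ≤ 2 * (1 + r) * L := by
      have hx1 : x + 1 ≤ (Real.exp 1 + y) * (1 + L ^ r) := by
        have : x = y * L ^ r := hΨeq.symm
        rw [this]
        have he1 : (1:ℝ) ≤ Real.exp 1 := by
          have := Real.add_one_le_exp (1:ℝ); linarith
        nlinarith [Real.exp_pos 1]
      have hpos1 : (0:ℝ) < Real.exp 1 + y := by positivity
      have hpos2 : (0:ℝ) < 1 + L ^ r := by linarith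
      calc Real.log (x + 1) ≤ Real.log ((Real.exp 1 + y) * (1 + L ^ r)) :=
            Real.log_le_log (by linarith) hx1
        _ = L + Real.log (1 + L ^ r) := by rw [Real.log_mul (ne_of_gt hpos1) (ne_of_gt hpos2)]
        _ ≤ L + Real.log (2 * L ^ r) := by
            have := Real.log_le_log (by linarith : (0:ℝ) < 1 + L ^ r)
              (by linarith : 1 + L ^ r ≤ 2 * L ^ r)
            linarith
        _ = L + (Real.log 2 + r * Real.log L) := by
            rw [Real.log_mul two_ne_zero (by positivity),
              Real.log_rpow (by linarith : (0:ℝ) < L)]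
        _ ≤ L + (L + r * L) := by
            have hlog2 : Real.log 2 ≤ 1 := by
              have := Real.log_le_sub_one_of_pos (by norm_num : (0:ℝ) < 2); linarith
            have hlogL : Real.log L ≤ L := by
              have := Real.log_le_sub_one_of_pos (by linarith : (0:ℝ) < L); linarith
            have : r * Real.log L ≤ r * L := mul_le_mul_of_nonneg_left hlogL hr0
            linarith
        _ ≤ 2 * (1 + r) * L := by nlinarith
    have hlogx0 : 0 ≤ Real.log (x + 1) := Real.log_nonneg (by linarith)
    have hprod : (∏ i, Real.log (x + 1) ^ (1 / s i)) = Real.log (x + 1) ^ r := by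
      rw [hr]
      rcases eq_or_lt_of_le hlogx0 with h | h
      · rcases eq_or_lt_of_le hlogx0 with h' | h'
        · rw [← h']
          have i0 : Fin m := ⟨0, hm⟩
          rw [Finset.prod_eq_zero (Finset.mem_univ i0)
            (Real.zero_rpow (one_div_ne_zero (ne_of_gt (hspos i0)))),
            Real.zero_rpow]
          have : (0:ℝ) < ∑ i, 1 / s i := by
            apply Finset.sum_pos (fun i _ => one_div_pos.mpr (hspos i))
            exact ⟨i0, Finset.mem_univ i0⟩
          exact ne_of_gt this
        · exact (Real.rpow_sum_of_pos h' _ _).symm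
      · exact (Real.rpow_sum_of_pos h _ _).symm
    rw [hprod]
    calc Real.log (x + 1) ^ r * y ≤ (2 * (1 + r) * L) ^ r * y := by
          apply mul_le_mul_of_nonneg_right _ hΨ0
          exact Real.rpow_le_rpow hlogx0 hkey hr0
      _ = (2:ℝ) ^ r * (1 + r) ^ r * (y * L ^ r) := by
          rw [Real.mul_rpow (by positivity) hL0,
            Real.mul_rpow (by norm_num) (by linarith)]
          ring
      _ = (2:ℝ) ^ r * (1 + r) ^ r * x := by rw [hΨeq]
end

section
/- Let η ∈ (0,1) and let S be an η-sparse family of dyadic cubes. Then there exist constants c, α > 0 (depending only on η) such that for every dyadic cube Q and every t > 0, |{x ∈ Q : Σ_{Q' ∈ S, Q' ⊆ Q} χ_{Q'}(x) > t}| ≤ c e^{-αt} |Q|. -/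
open MeasureTheory ENNReal

/-- In a finite chain of sets there is a maximum element. -/
lemma finset_chain_max {ι γ : Type*} (g : ι → Set γ) (F : Finset ι) (hne : F.Nonempty)
    (hch : ∀ a ∈ F, ∀ b ∈ F, g a ⊆ g b ∨ g b ⊆ g a) :
    ∃ c ∈ F, ∀ a ∈ F, g a ⊆ g c := by
  induction F using Finset.cons_induction with
  | empty => exact absurd hne (by simp)
  | cons a F ha ih =>
    rcases F.eq_empty_or_nonempty with rfl | hF
    · exact ⟨a, by simp, by simp⟩
    · obtain ⟨c, hcF, hc⟩ := ih hF
        (fun x hx y hy => hch _ (Finset.mem_cons_of_mem hx) _ (Finset.mem_cons_of_mem hy))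
      rcases hch a (Finset.mem_cons_self a F) c (Finset.mem_cons_of_mem hcF) with h | h
      · refine ⟨c, Finset.mem_cons_of_mem hcF, fun x hx => ?_⟩
        rcases Finset.mem_cons.1 hx with rfl | hx
        · exact h
        · exact hc x hx
      · refine ⟨a, Finset.mem_cons_self a F, fun x hx => ?_⟩
        rcases Finset.mem_cons.1 hx with rfl | hx
        · exact subset_rfl
        · exact (hc x hx).trans h

/-- From a finite chain we can extract the "top `j`" elements. -/
lemma finset_chain_top {ι γ : Type*} [DecidableEq ι] (g : ι → Set γ) (F : Finset ι)
    (hch : ∀ a ∈ F, ∀ b ∈ F, g a ⊆ g b ∨ g b ⊆ g a) :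
    ∀ j, j ≤ F.card → ∃ M ⊆ F, M.card = j ∧ ∀ a ∈ F \ M, ∀ b ∈ M, g a ⊆ g b := by
  intro j
  induction j with
  | zero => exact fun _ => ⟨∅, by simp⟩
  | succ j ih =>
    intro hj
    obtain ⟨M, hMF, hMc, hM⟩ := ih (le_of_lt (Nat.lt_of_succ_le hj))
    have hne : (F \ M).Nonempty := by
      rw [← Finset.card_pos, Finset.card_sdiff_of_subset hMF, hMc]
      omega
    obtain ⟨c, hcF, hc⟩ := finset_chain_max g (F \ M) hne
      (fun x hx y hy => hch _ (Finset.mem_sdiff.1 hx).1 _ (Finset.mem_sdiff.1 hy).1)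
    have hcM : c ∉ M := (Finset.mem_sdiff.1 hcF).2
    refine ⟨insert c M, ?_, ?_, ?_⟩
    · exact Finset.insert_subset (Finset.mem_sdiff.1 hcF).1 hMF
    · rw [Finset.card_insert_of_notMem hcM, hMc]
    · intro a ha b hb
      have ha' : a ∈ F \ M := by
        rcases Finset.mem_sdiff.1 ha with ⟨haF, haM⟩
        exact Finset.mem_sdiff.2 ⟨haF, fun h => haM (Finset.mem_insert_of_mem h)⟩
      rcases Finset.mem_insert.1 hb with rfl | hb
      · exact hc a ha'
      · exact hM a ha' b hb

/-- Extract a finset of indices whose sets contain `x`, from a lower bound on the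
counting sum. -/
lemma exists_finset_of_lt_tsum {γ ι : Type*} (f : ι → Set γ) (x : γ) (n : ℕ)
    (h : (n : ℝ≥0∞) < ∑' i, (f i).indicator (fun _ => (1 : ℝ≥0∞)) x) :
    ∃ F : Finset ι, F.card = n ∧ ∀ i ∈ F, x ∈ f i := by
  classical
  set T : Set ι := {i | x ∈ f i} with hT
  rcases T.finite_or_infinite with hTf | hTf
  · have hsum : ∑' i, (f i).indicator (fun _ => (1 : ℝ≥0∞)) x
        ≤ (hTf.toFinset.card : ℝ≥0∞) := by
      rw [tsum_eq_sum (s := hTf.toFinset)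
        (fun i hi => Set.indicator_of_notMem (show x ∉ f i from fun hx => hi (hTf.mem_toFinset.2 hx)) _)]
      calc ∑ i ∈ hTf.toFinset, (f i).indicator (fun _ => (1 : ℝ≥0∞)) x
          ≤ ∑ _i ∈ hTf.toFinset, (1 : ℝ≥0∞) := by
            refine Finset.sum_le_sum fun i _ => ?_
            by_cases hx : x ∈ f i <;> simp [Set.indicator_apply, hx]
        _ = hTf.toFinset.card := by simp
    have hn : n < hTf.toFinset.card := by exact_mod_cast h.trans_le hsum
    obtain ⟨F, hF, hcard⟩ := Finset.exists_subset_card_eq (s := hTf.toFinset) hn.le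
    exact ⟨F, hcard, fun i hi => by simpa [hT] using hTf.mem_toFinset.1 (hF hi)⟩
  · obtain ⟨F, hFT, hcard⟩ := hTf.exists_subset_card_eq n
    exact ⟨F, hcard, fun i hi => hFT hi⟩

open Classical in
/-- The recursive chain-counting function: `Hfun S k p x` is the number of weakly
decreasing chains `p ⊇ p₁ ⊇ ⋯ ⊇ p_k` in `S` with `x ∈ p_k` (for `k = 0`, the
indicator of `p`). -/
noncomputable def Hfun {α : Type*} (S : Set (Set α)) : ℕ → {P : Set α // P ∈ S} → α → ℝ≥0∞
  | 0 => fun p x => (p : Set α).indicator (fun _ => (1 : ℝ≥0∞)) x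
  | (k+1) => fun p x => ∑' p' : {P : Set α // P ∈ S},
      if (p' : Set α) ⊆ (p : Set α) then Hfun S k p' x else 0

open Classical in
/-- Lower bound: if `x` belongs to `m*(k+1)` cubes of `S` inside `R`, then the number of
weakly decreasing `(k+1)`-chains below `R` whose bottom contains `x` is at least `m^(k+1)`. -/
lemma Hfun_lower {α : Type*} (S : Set (Set α))
    (hnested : ∀ P ∈ S, ∀ Q ∈ S, P ⊆ Q ∨ Q ⊆ P ∨ Disjoint P Q)
    (x : α) (m : ℕ) :
    ∀ (k : ℕ) (R : Set α) (F : Finset {P : Set α // P ∈ S}),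
      F.card = m * (k + 1) → (∀ q ∈ F, x ∈ (q : Set α) ∧ (q : Set α) ⊆ R) →
      (m : ℝ≥0∞) ^ (k + 1) ≤
        ∑' p : {P : Set α // P ∈ S}, if (p : Set α) ⊆ R then Hfun S k p x else 0 := by
  intro k
  induction k with
  | zero =>
    intro R F hcard hF
    have h1 : ∀ p ∈ F, (1 : ℝ≥0∞) = (if (p : Set α) ⊆ R then Hfun S 0 p x else 0) := by
      intro p hp
      have hx := hF p hp
      simp [Hfun, hx.2, Set.indicator_of_mem hx.1]
    calc (m : ℝ≥0∞) ^ (0 + 1) = ∑ _p ∈ F, (1 : ℝ≥0∞) := by simp [hcard]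
      _ = ∑ p ∈ F, (if (p : Set α) ⊆ R then Hfun S 0 p x else 0) := Finset.sum_congr rfl h1
      _ ≤ _ := ENNReal.sum_le_tsum F
  | succ k ih =>
    intro R F hcard hF
    have hch : ∀ a ∈ F, ∀ b ∈ F, (a : Set α) ⊆ (b : Set α) ∨ (b : Set α) ⊆ (a : Set α) := by
      intro a ha b hb
      rcases hnested _ a.2 _ b.2 with h | h | h
      · exact Or.inl h
      · exact Or.inr h
      · exact absurd h (Set.not_disjoint_iff.2 ⟨x, (hF a ha).1, (hF b hb).1⟩)
    have hmle : m ≤ F.card := by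
      rw [hcard]
      calc m = m * 1 := (mul_one m).symm
        _ ≤ m * (k + 1 + 1) := Nat.mul_le_mul_left m (by omega)
    obtain ⟨M, hMF, hMc, hM⟩ := finset_chain_top (fun p : {P : Set α // P ∈ S} => (p : Set α)) F hch m hmle
    have hFM : (F \ M).card = m * (k + 1) := by
      rw [Finset.card_sdiff_of_subset hMF, hcard, hMc]
      ring_nf
      omega
    have hstep : ∀ p ∈ M, (m : ℝ≥0∞) ^ (k + 1) ≤ Hfun S (k + 1) p x := by
      intro p hp
      have := ih (p : Set α) (F \ M) hFM (fun q hq =>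
        ⟨(hF q (Finset.sdiff_subset hq)).1, hM q hq p hp⟩)
      simpa [Hfun] using this
    calc (m : ℝ≥0∞) ^ (k + 1 + 1) = ∑ _p ∈ M, (m : ℝ≥0∞) ^ (k + 1) := by
          rw [Finset.sum_const, hMc, nsmul_eq_mul, pow_succ, mul_comm]
      _ ≤ ∑ p ∈ M, (if (p : Set α) ⊆ R then Hfun S (k + 1) p x else 0) := by
          refine Finset.sum_le_sum fun p hp => ?_
          rw [if_pos (hF p (hMF hp)).2]
          exact hstep p hp
      _ ≤ _ := ENNReal.sum_le_tsum M

open Classical in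
/-- Measurability and the Carleson-type integral bound for `Hfun`. -/
lemma Hfun_lintegral {α : Type*} [MeasurableSpace α] (μ : Measure α) (S : Set (Set α))
    (hScount : S.Countable) (hmeas : ∀ P ∈ S, MeasurableSet P) (Λ : ℝ≥0∞)
    (hCar : ∀ p : {P : Set α // P ∈ S},
      (∑' p' : {P : Set α // P ∈ S}, if (p' : Set α) ⊆ (p : Set α) then μ p' else 0)
        ≤ Λ * μ p) :
    ∀ (k : ℕ) (p : {P : Set α // P ∈ S}),
      Measurable (Hfun S k p) ∧ ∫⁻ x, Hfun S k p x ∂μ ≤ Λ ^ k * μ p := by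
  haveI : Countable {P : Set α // P ∈ S} := hScount.to_subtype
  intro k
  induction k with
  | zero =>
    intro p
    constructor
    · exact measurable_const.indicator (hmeas _ p.2)
    · have hrfl : Hfun S 0 p = (p : Set α).indicator (fun _ => (1 : ℝ≥0∞)) := rfl
      rw [hrfl, lintegral_indicator (hmeas _ p.2)]
      simp
  | succ k ih =>
    intro p
    have hm : Measurable (Hfun S (k + 1) p) := by
      rw [show Hfun S (k + 1) p = fun x => ∑' p' : {P : Set α // P ∈ S},
        if (p' : Set α) ⊆ (p : Set α) then Hfun S k p' x else 0 from rfl]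
      exact Measurable.ennreal_tsum fun p' => by
        split
        · exact (ih p').1
        · exact measurable_const
    refine ⟨hm, ?_⟩
    calc ∫⁻ x, Hfun S (k + 1) p x ∂μ
        = ∑' p' : {P : Set α // P ∈ S},
            ∫⁻ x, (if (p' : Set α) ⊆ (p : Set α) then Hfun S k p' x else 0) ∂μ := by
          rw [show Hfun S (k + 1) p = fun x => ∑' p' : {P : Set α // P ∈ S},
            if (p' : Set α) ⊆ (p : Set α) then Hfun S k p' x else 0 from rfl]
          exact lintegral_tsum fun p' => by
            split
            · exact (ih p').1.aemeasurable
            · exact aemeasurable_const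
      _ ≤ ∑' p' : {P : Set α // P ∈ S},
            (if (p' : Set α) ⊆ (p : Set α) then Λ ^ k * μ p' else 0) := by
          refine ENNReal.tsum_le_tsum fun p' => ?_
          split
          · exact (ih p').2
          · simp
      _ = Λ ^ k * ∑' p' : {P : Set α // P ∈ S},
            (if (p' : Set α) ⊆ (p : Set α) then μ p' else 0) := by
          rw [← ENNReal.tsum_mul_left]
          refine tsum_congr fun p' => ?_
          split <;> simp
      _ ≤ Λ ^ k * (Λ * μ p) := by
          exact mul_le_mul_right (hCar p) _
      _ = Λ ^ (k + 1) * μ p := by ring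
/-- Exponential decay for the counting function of an `η`-sparse family of dyadic cubes:
there exist `c, a > 0` depending only on `η` such that for every dyadic cube `Q` and
`t > 0`, `|{x ∈ Q : Σ_{Q'∈S, Q'⊆Q} χ_{Q'}(x) > t}| ≤ c e^{-a t} |Q|`.  The dyadic
lattice `𝒟` is axiomatized by the nested-or-disjoint property, and sparseness by the
existence of pairwise disjoint major subsets `E Q ⊆ Q` with `|E Q| ≥ η |Q|`. -/
theorem stmt_19 {α : Type*} [MeasurableSpace α] (μ : Measure α)
    (η : ℝ) (hη : 0 < η) (hη1 : η < 1)
    (𝒟 : Set (Set α))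
    (h𝒟meas : ∀ Q ∈ 𝒟, MeasurableSet Q)
    (h𝒟fin : ∀ Q ∈ 𝒟, μ Q < ⊤)
    (h𝒟nested : ∀ P ∈ 𝒟, ∀ Q ∈ 𝒟, P ⊆ Q ∨ Q ⊆ P ∨ Disjoint P Q)
    (S : Set (Set α)) (hS : S ⊆ 𝒟) (hScount : S.Countable)
    (E : Set α → Set α)
    (hE : ∀ Q ∈ S, E Q ⊆ Q ∧ MeasurableSet (E Q) ∧ ENNReal.ofReal η * μ Q ≤ μ (E Q))
    (hdisj : S.Pairwise fun P Q => Disjoint (E P) (E Q)) :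
    ∃ c a : ℝ, 0 < c ∧ 0 < a ∧ ∀ Q ∈ 𝒟, ∀ t : ℝ, 0 < t →
      μ {x ∈ Q | ENNReal.ofReal t <
          ∑' P : {P : Set α // P ∈ S ∧ P ⊆ Q},
            (P : Set α).indicator (fun _ => (1 : ENNReal)) x} ≤
        ENNReal.ofReal (c * Real.exp (-a * t)) * μ Q := by
  classical
  haveI : Countable {P : Set α // P ∈ S} := hScount.to_subtype
  set Λ : ℝ≥0∞ := (ENNReal.ofReal η)⁻¹ with hΛ
  set m : ℕ := ⌈2 / η⌉₊ with hm
  have hm0' : 0 < m := Nat.ceil_pos.2 (by positivity)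
  have hm0 : 0 < (m : ℝ) := by exact_mod_cast hm0'
  have hmη : 2 ≤ (m : ℝ) * η := by
    have h1 : (2 / η : ℝ) ≤ m := Nat.le_ceil _
    calc (2 : ℝ) = (2 / η) * η := by field_simp
      _ ≤ m * η := mul_le_mul_of_nonneg_right h1 hη.le
  have hlog2 : 0 < Real.log 2 := Real.log_pos (by norm_num)
  refine ⟨2, Real.log 2 / m, by norm_num, div_pos hlog2 hm0, ?_⟩
  intro Q hQ t ht
  have hη0 : ENNReal.ofReal η ≠ 0 := by
    simp only [ne_eq, ENNReal.ofReal_eq_zero, not_le]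
    exact hη
  have hηtop : ENNReal.ofReal η ≠ ⊤ := ENNReal.ofReal_ne_top
  -- Carleson packing condition
  have hCar : ∀ R ∈ 𝒟, (∑' p : {P : Set α // P ∈ S},
      if (p : Set α) ⊆ R then μ p else 0) ≤ Λ * μ R := by
    intro R hR
    set X := ∑' p : {P : Set α // P ∈ S}, if (p : Set α) ⊆ R then μ (p : Set α) else 0 with hX
    have hd : Pairwise (Function.onFun Disjoint
        (fun p : {P : Set α // P ∈ S} => if (p : Set α) ⊆ R then E p else (∅ : Set α))) := by
      intro p q hpq
      simp only [Function.onFun]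
      split
      · split
        · exact hdisj p.2 q.2 fun h => hpq (Subtype.ext h)
        · exact disjoint_bot_right
      · exact disjoint_bot_left
    have hdm : ∀ p : {P : Set α // P ∈ S}, MeasurableSet
        (if (p : Set α) ⊆ R then E p else (∅ : Set α)) := fun p => by
      split
      · exact (hE _ p.2).2.1
      · exact MeasurableSet.empty
    have key : ENNReal.ofReal η * X ≤ μ R := by
      calc ENNReal.ofReal η * X
          = ∑' p : {P : Set α // P ∈ S},
              (if (p : Set α) ⊆ R then ENNReal.ofReal η * μ (p : Set α) else 0) := by
            rw [hX, ← ENNReal.tsum_mul_left]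
            exact tsum_congr fun p => by split <;> simp
        _ ≤ ∑' p : {P : Set α // P ∈ S},
              (if (p : Set α) ⊆ R then μ (E p) else 0) := by
            refine ENNReal.tsum_le_tsum fun p => ?_
            split
            · exact (hE _ p.2).2.2
            · exact le_rfl
        _ = ∑' p : {P : Set α // P ∈ S},
              μ (if (p : Set α) ⊆ R then E p else ∅) := by
            exact tsum_congr fun p => by split <;> simp
        _ = μ (⋃ p : {P : Set α // P ∈ S}, if (p : Set α) ⊆ R then E p else ∅) :=
            (measure_iUnion hd hdm).symm
        _ ≤ μ R := by
            refine measure_mono (Set.iUnion_subset fun p => ?_)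
            split
            · exact (hE _ p.2).1.trans (by assumption)
            · exact Set.empty_subset R
    calc X = (ENNReal.ofReal η)⁻¹ * (ENNReal.ofReal η * X) := by
          rw [← mul_assoc, ENNReal.inv_mul_cancel hη0 hηtop, one_mul]
      _ ≤ Λ * μ R := mul_le_mul_right key _
  have hHL := Hfun_lintegral μ S hScount (fun P hP => h𝒟meas P (hS hP)) Λ
    (fun p => hCar _ (hS p.2))
  set j : ℕ := ⌊t / m⌋₊ with hj
  -- the basic real-number estimate
  have hkey : ((1 : ℝ) / 2) ^ j ≤ 2 * Real.exp (-(Real.log 2 / m) * t) := by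
    have h1 : t / m < (j : ℝ) + 1 := Nat.lt_floor_add_one _
    have h2 : -(Real.log 2 / m) * t = -(Real.log 2 * (t / m)) := by ring
    have h3 : Real.log 2 * (t / m) ≤ ((j : ℝ) + 1) * Real.log 2 := by nlinarith
    have h4 : ((1 : ℝ) / 2) ^ (j + 1) = Real.exp (-(((j : ℝ) + 1) * Real.log 2)) := by
      have hc : ((j : ℝ) + 1) = ((j + 1 : ℕ) : ℝ) := by push_cast; ring
      rw [Real.exp_neg, hc, Real.exp_nat_mul, Real.exp_log (by norm_num : (0:ℝ) < 2),
        ← inv_pow, one_div]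
    calc ((1 : ℝ) / 2) ^ j = 2 * ((1 / 2) ^ (j + 1)) := by rw [pow_succ]; ring
      _ ≤ 2 * Real.exp (-(Real.log 2 / m) * t) := by
          rw [h4, h2]
          have := Real.exp_le_exp.2 (neg_le_neg h3)
          linarith
  rcases Nat.eq_zero_or_pos j with hj0 | hjpos
  · -- small `t`: trivial bound
    have h1le : (1 : ℝ) ≤ 2 * Real.exp (-(Real.log 2 / m) * t) := by
      simpa [hj0] using hkey
    calc μ {x ∈ Q | ENNReal.ofReal t <
          ∑' P : {P : Set α // P ∈ S ∧ P ⊆ Q},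
            (P : Set α).indicator (fun _ => (1 : ENNReal)) x}
        ≤ μ Q := measure_mono (Set.sep_subset _ _)
      _ = 1 * μ Q := (one_mul _).symm
      _ ≤ ENNReal.ofReal (2 * Real.exp (-(Real.log 2 / m) * t)) * μ Q := by
          refine mul_le_mul_left ?_ _
          rw [← ENNReal.ofReal_one]
          exact ENNReal.ofReal_le_ofReal h1le
  · obtain ⟨k, hk⟩ := Nat.exists_eq_succ_of_ne_zero (Nat.pos_iff_ne_zero.1 hjpos)
    have hmjt : ((m * j : ℕ) : ℝ) ≤ t := by
      push_cast
      have hfl : (j : ℝ) ≤ t / m := Nat.floor_le (by positivity)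
      calc (m : ℝ) * j ≤ (m : ℝ) * (t / m) := by
            exact mul_le_mul_of_nonneg_left hfl hm0.le
        _ = t := by field_simp
    set f : α → ℝ≥0∞ := Q.indicator (fun x => ∑' p : {P : Set α // P ∈ S},
      if (p : Set α) ⊆ Q then Hfun S k p x else 0) with hf
    have hfmeas : Measurable f := by
      refine Measurable.indicator ?_ (h𝒟meas Q hQ)
      exact Measurable.ennreal_tsum fun p => by
        split
        · exact (hHL k p).1
        · exact measurable_const
    have hsub : {x ∈ Q | ENNReal.ofReal t <
          ∑' P : {P : Set α // P ∈ S ∧ P ⊆ Q},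
            (P : Set α).indicator (fun _ => (1 : ENNReal)) x}
        ⊆ {x | (m : ℝ≥0∞) ^ j ≤ f x} := by
      rintro x ⟨hxQ, hxt⟩
      have hlt : ((m * j : ℕ) : ℝ≥0∞) <
          ∑' P : {P : Set α // P ∈ S ∧ P ⊆ Q},
            (P : Set α).indicator (fun _ => (1 : ENNReal)) x := by
        refine lt_of_le_of_lt ?_ hxt
        rw [← ENNReal.ofReal_natCast]
        exact ENNReal.ofReal_le_ofReal hmjt
      obtain ⟨F', hcard', hF'⟩ := exists_finset_of_lt_tsum
        (fun i : {P : Set α // P ∈ S ∧ P ⊆ Q} => (i : Set α)) x (m * j) hlt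
      set g : {P : Set α // P ∈ S ∧ P ⊆ Q} → {P : Set α // P ∈ S} :=
        fun i => ⟨(i : Set α), i.2.1⟩ with hg
      have hginj : Function.Injective g := by
        intro a b hab
        apply Subtype.ext
        have h' := congrArg Subtype.val hab
        simpa [hg] using h'
      have hFc : (F'.image g).card = m * (k + 1) := by
        rw [Finset.card_image_of_injective _ hginj, hcard', hk]
      have hqF : ∀ q ∈ F'.image g, x ∈ (q : Set α) ∧ (q : Set α) ⊆ Q := by
        intro q hq
        obtain ⟨i, hiF, rfl⟩ := Finset.mem_image.1 hq
        exact ⟨hF' i hiF, i.2.2⟩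
      have hlow := Hfun_lower S (fun P hP Q' hQ' => h𝒟nested P (hS hP) Q' (hS hQ'))
        x m k Q (F'.image g) hFc hqF
      show (m : ℝ≥0∞) ^ j ≤ f x
      rw [hf, Set.indicator_of_mem hxQ, hk]
      exact hlow
    have hcheb : (m : ℝ≥0∞) ^ j * μ {x | (m : ℝ≥0∞) ^ j ≤ f x} ≤ ∫⁻ x, f x ∂μ :=
      mul_meas_ge_le_lintegral₀ hfmeas.aemeasurable _
    have hint : ∫⁻ x, f x ∂μ ≤ Λ ^ j * μ Q := by
      calc ∫⁻ x, f x ∂μ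
          ≤ ∫⁻ x, (∑' p : {P : Set α // P ∈ S},
              if (p : Set α) ⊆ Q then Hfun S k p x else 0) ∂μ :=
            lintegral_mono fun x => Set.indicator_le_self _ _ x
        _ = ∑' p : {P : Set α // P ∈ S},
              ∫⁻ x, (if (p : Set α) ⊆ Q then Hfun S k p x else 0) ∂μ := by
            refine lintegral_tsum fun p => ?_
            split
            · exact (hHL k p).1.aemeasurable
            · exact aemeasurable_const
        _ ≤ ∑' p : {P : Set α // P ∈ S},
              (if (p : Set α) ⊆ Q then Λ ^ k * μ (p : Set α) else 0) := by
            refine ENNReal.tsum_le_tsum fun p => ?_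
            by_cases hc : (p : Set α) ⊆ Q
            · simpa [hc] using (hHL k p).2
            · simp [hc]
        _ = Λ ^ k * ∑' p : {P : Set α // P ∈ S},
              (if (p : Set α) ⊆ Q then μ (p : Set α) else 0) := by
            rw [← ENNReal.tsum_mul_left]
            exact tsum_congr fun p => by split <;> simp
        _ ≤ Λ ^ k * (Λ * μ Q) := mul_le_mul_right (hCar Q hQ) _
        _ = Λ ^ j * μ Q := by rw [hk, pow_succ]; ring
    have hε0 : ((m : ℝ≥0∞) ^ j) ≠ 0 := by
      apply pow_ne_zero
      exact_mod_cast hm0'.ne'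
    have hεtop : ((m : ℝ≥0∞) ^ j) ≠ ⊤ := by
      exact ENNReal.pow_ne_top (ENNReal.natCast_ne_top m)
    have hfrac : (1 / ((m : ℝ) * η)) ≤ 1 / 2 := one_div_le_one_div_of_le (by norm_num) hmη
    have hid : ((m : ℝ≥0∞) ^ j)⁻¹ * Λ ^ j = ENNReal.ofReal ((1 / ((m : ℝ) * η)) ^ j) := by
      have hmηpos : (0 : ℝ) < (m : ℝ) * η := by positivity
      rw [ENNReal.ofReal_pow (by positivity), one_div,
        ENNReal.ofReal_inv_of_pos hmηpos, ENNReal.ofReal_mul hm0.le,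
        ENNReal.ofReal_natCast,
        ENNReal.mul_inv (Or.inr hηtop) (Or.inl (ENNReal.natCast_ne_top m)),
        mul_pow, ENNReal.inv_pow, hΛ]
    have hnum : ((m : ℝ≥0∞) ^ j)⁻¹ * Λ ^ j
        ≤ ENNReal.ofReal (2 * Real.exp (-(Real.log 2 / m) * t)) := by
      rw [hid]
      refine ENNReal.ofReal_le_ofReal ?_
      exact le_trans (pow_le_pow_left₀ (by positivity) hfrac j) hkey
    calc μ {x ∈ Q | ENNReal.ofReal t <
          ∑' P : {P : Set α // P ∈ S ∧ P ⊆ Q},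
            (P : Set α).indicator (fun _ => (1 : ENNReal)) x}
        ≤ μ {x | (m : ℝ≥0∞) ^ j ≤ f x} := measure_mono hsub
      _ = ((m : ℝ≥0∞) ^ j)⁻¹ * ((m : ℝ≥0∞) ^ j * μ {x | (m : ℝ≥0∞) ^ j ≤ f x}) := by
          rw [← mul_assoc, ENNReal.inv_mul_cancel hε0 hεtop, one_mul]
      _ ≤ ((m : ℝ≥0∞) ^ j)⁻¹ * (Λ ^ j * μ Q) :=
          mul_le_mul_right (hcheb.trans hint) _
      _ = (((m : ℝ≥0∞) ^ j)⁻¹ * Λ ^ j) * μ Q := (mul_assoc _ _ _).symm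
      _ ≤ ENNReal.ofReal (2 * Real.exp (-(Real.log 2 / m) * t)) * μ Q :=
          mul_le_mul_left hnum _
end
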